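/- The q-Fibonacci polynomials satisfy the recurrence F_n(x,s,q) = x·F_{n-1}(x,s,q) + q^{n-2}·s·F_{n-2}(x,s/q,q) for all n ≥ 2. -/

import Mathlib

open Finset

noncomputable section

abbrev K : Type := RatFunc ℚ

def q : K := RatFunc.X

def qint (a : K) (m : ℕ) : K := ∑ i ∈ range m, a ^ i

def qfact (a : K) (m : ℕ) : K := ∏ i ∈ range m, qint a (i + 1)

def qbinom (a : K) (n k : ℕ) : K :=
  if k ≤ n then qfact a n / (qfact a k * qfact a (n - k)) else 0

/-- q-Fibonacci polynomials F_n(x,s,q) with base `a`. -/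
def qF (a x s : K) : ℕ → K
  | 0 => 0
  | n + 1 => ∑ k ∈ range (n / 2 + 1),
      a ^ (k * (k + 1) / 2) * qbinom a (n - k) k * s ^ k * x ^ (n - 2 * k)

/-- q-Lucas polynomials L_n(x,s,q) with base `a` (L_0 = 2). -/
def qL (a x s : K) (n : ℕ) : K :=
  if n = 0 then 2 else
  ∑ k ∈ range (n / 2 + 1),
    a ^ (k * (k - 1) / 2) * (qint a n / qint a (n - k)) * qbinom a (n - k) k
      * s ^ k * x ^ (n - 2 * k)

/-- Starred variant: L*_0 = 1, L*_n = L_n for n > 0. -/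
def qLs (a x s : K) (n : ℕ) : K := if n = 0 then 1 else qL a x s n

/-- Rogers-Szegő polynomial. -/
def rs (a x y : K) (m : ℕ) : K := ∑ j ∈ range (m + 1), qbinom a m j * x ^ j * y ^ (m - j)

/-- q-Pochhammer (q;q)_m. -/
def qpoch (a : K) (m : ℕ) : K := ∏ j ∈ range m, (1 - a ^ (j + 1))

open Polynomial in
lemma q_pow_ne_one (m : ℕ) (hm : 1 ≤ m) : q ^ m ≠ 1 := by
  intro h
  have : (Polynomial.X : ℚ[X]) ^ m = 1 := by
    apply RatFunc.algebraMap_injective ℚ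
    simpa [q, map_pow, RatFunc.algebraMap_X] using h
  have := congrArg Polynomial.natDegree this
  simp [Polynomial.natDegree_X_pow] at this
  omega

lemma qint_ne_zero (m : ℕ) (hm : 1 ≤ m) : qint q m ≠ 0 := by
  intro h
  have h1 : (q : K) ≠ 1 := by simpa using q_pow_ne_one 1 le_rfl
  have hg := geom_sum_eq h1 m
  rw [qint] at h
  rw [h] at hg
  rcases div_eq_zero_iff.mp hg.symm with h2 | h2
  · exact q_pow_ne_one m hm (by rwa [sub_eq_zero] at h2)
  · exact h1 (by rwa [sub_eq_zero] at h2)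

lemma qfact_ne_zero (m : ℕ) : qfact q m ≠ 0 :=
  Finset.prod_ne_zero_iff.mpr fun i _ => qint_ne_zero (i+1) (Nat.le_add_left 1 i)

lemma qfact_succ (m : ℕ) : qfact q (m+1) = qfact q m * qint q (m+1) := Finset.prod_range_succ _ _

lemma qint_add (a b : ℕ) : qint q (a + b) = qint q a + q ^ a * qint q b := by
  simp [qint, Finset.sum_range_add, Finset.mul_sum, pow_add]

lemma qbinom_zero (n : ℕ) : qbinom q n 0 = 1 := by
  simp [qbinom, qfact, div_self (qfact_ne_zero n), qfact_ne_zero]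
  exact qfact_ne_zero n

lemma qPascal (N k : ℕ) :
    qbinom q (N+1) (k+1) = qbinom q N (k+1) + q^(N-k) * qbinom q N k := by
  rcases lt_trichotomy k N with h | h | h
  · have e1 : N + 1 - (k+1) = N - k := by omega
    have e2 : N - (k+1) = N - k - 1 := by omega
    rw [qbinom, qbinom, qbinom, if_pos (by omega), if_pos (by omega), if_pos (by omega), e1, e2]
    have hNk : N - k = (N - k - 1) + 1 := by omega
    have hsplit : qint q (N+1) = qint q (N-k) + q^(N-k) * qint q (k+1) := by
      have := qint_add (N-k) (k+1)
      rwa [show N - k + (k+1) = N+1 by omega] at this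
    rw [qfact_succ N, hsplit, hNk, qfact_succ (N-k-1), qfact_succ k, ← hNk]
    have h1 := qint_ne_zero (N-k) (by omega)
    have h2 := qint_ne_zero (k+1) (by omega)
    have h3 := qfact_ne_zero k
    have h4 := qfact_ne_zero (N-k-1)
    have h5 := qfact_ne_zero N
    field_simp
  · subst h
    have h0 : qfact q 0 = 1 := by simp [qfact]
    rw [qbinom, qbinom, qbinom, if_pos le_rfl, if_neg (by omega), if_pos le_rfl]
    simp [h0, div_self (qfact_ne_zero _)]
  · rw [qbinom, qbinom, qbinom, if_neg (by omega), if_neg (by omega), if_neg (by omega)]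
    ring

lemma hzero (a b : ℕ) (h : a < b) : qbinom q a b = 0 := by rw [qbinom, if_neg (by omega)]

theorem stmt1 (x s : K) (n : ℕ) (hn : 2 ≤ n) :
    qF q x s n = x * qF q x s (n - 1) + q ^ (n - 2) * s * qF q x (s / q) (n - 2) := by
  obtain ⟨m, rfl⟩ : ∃ m, n = m + 2 := ⟨n - 2, by omega⟩
  rcases m with _ | l
  · show qF q x s 2 = x * qF q x s 1 + q ^ 0 * s * qF q x (s/q) 0
    simp [qF, qbinom_zero]
  · show qF q x s (l+3) = x * qF q x s (l+2) + q ^ (l+1) * s * qF q x (s/q) (l+1)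
    simp only [qF]
    have hq : (q:K) ≠ 0 := RatFunc.X_ne_zero
    have hLHS : (∑ k ∈ range ((l+2)/2+1), q^(k*(k+1)/2) * qbinom q (l+2-k) k * s^k * x^(l+2-2*k))
        = ∑ k ∈ range ((l+1)/2+2), q^(k*(k+1)/2) * qbinom q (l+2-k) k * s^k * x^(l+2-2*k) := by
      apply Finset.sum_subset (Finset.range_subset_range.mpr (by omega))
      intro k hk1 hk2
      simp only [mem_range] at hk1 hk2
      rw [hzero (l+2-k) k (by omega)]; ring
    have hMID : (∑ k ∈ range ((l+1)/2+1), q^(k*(k+1)/2) * qbinom q (l+1-k) k * s^k * x^(l+1-2*k))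
        = ∑ k ∈ range ((l+1)/2+2), q^(k*(k+1)/2) * qbinom q (l+1-k) k * s^k * x^(l+1-2*k) := by
      apply Finset.sum_subset (Finset.range_subset_range.mpr (by omega))
      intro k hk1 hk2
      simp only [mem_range] at hk1 hk2
      rw [hzero (l+1-k) k (by omega)]; ring
    have hRHS : (∑ k ∈ range (l/2+1), q^(k*(k+1)/2) * qbinom q (l-k) k * (s/q)^k * x^(l-2*k))
        = ∑ k ∈ range ((l+1)/2+1), q^(k*(k+1)/2) * qbinom q (l-k) k * (s/q)^k * x^(l-2*k) := by
      apply Finset.sum_subset (Finset.range_subset_range.mpr (by omega))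
      intro k hk1 hk2
      simp only [mem_range] at hk1 hk2
      rw [hzero (l-k) k (by omega)]; ring
    rw [hLHS, hMID, hRHS, Finset.mul_sum _ _ x]
    have key : ∀ k ∈ range ((l+1)/2+2),
        q^(k*(k+1)/2) * qbinom q (l+2-k) k * s^k * x^(l+2-2*k)
        = x * (q^(k*(k+1)/2) * qbinom q (l+1-k) k * s^k * x^(l+1-2*k))
          + (if k = 0 then 0 else q^(l+1) * s *
              (q^((k-1)*k/2) * qbinom q (l-(k-1)) (k-1) * (s/q)^(k-1) * x^(l-2*(k-1)))) := by
      intro k hk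
      simp only [mem_range] at hk
      rcases k with _ | j
      · simp [qbinom_zero]
        ring
      · rw [if_neg (Nat.succ_ne_zero j)]
        simp only [Nat.add_sub_cancel]
        by_cases hcase : 2*j ≤ l
        · have hP := qPascal (l-j) j
          rw [show l+2-(j+1) = (l-j)+1 by omega, hP, show l-j-j = l-2*j by omega]
          have epow : q^(l+1) * q^(j*(j+1)/2) = q^((j+1)*(j+1+1)/2) * q^(l-2*j) * q^j := by
            rw [← pow_add, ← pow_add, ← pow_add]
            congr 1
            rw [show (j+1)*(j+1+1) = j*(j+1) + (j+1)*2 by ring,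
              Nat.add_mul_div_right _ _ (by norm_num : 0 < 2)]
            generalize j*(j+1)/2 = c
            omega
          have hsecond : q^((j+1)*(j+1+1)/2) * (q^(l-2*j) * qbinom q (l-j) j) * s^(j+1) * x^(l-2*j)
              = q^(l+1) * s * (q^(j*(j+1)/2) * qbinom q (l-j) j * (s/q)^j * x^(l-2*j)) := by
            rw [div_pow]
            field_simp
            linear_combination (-(qbinom q (l-j) j * s^(j+1) * x^(l-2*j))) * epow
          by_cases h2 : 2*j+1 ≤ l
          · rw [show l+1-2*(j+1) = l-2*j-1 by omega]
            have hx : x^(l-2*j) = x * x^(l-2*j-1) := by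
              conv_lhs => rw [show l - 2*j = (l-2*j-1)+1 by omega]
              rw [pow_succ']
            rw [show l+1-(j+1) = l-j by omega, show l+2-2*(j+1) = l-2*j by omega]
            linear_combination hsecond + q^((j+1)*(j+1+1)/2) * qbinom q (l-j) (j+1) * s^(j+1) * hx
          · rw [show l+1-(j+1) = l-j by omega, show l+2-2*(j+1) = l-2*j by omega,
              hzero (l-j) (j+1) (by omega)]
            linear_combination hsecond
        · rw [hzero (l+2-(j+1)) (j+1) (by omega), hzero (l+1-(j+1)) (j+1) (by omega),
            hzero (l-j) j (by omega)]
          ring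
    rw [Finset.sum_congr rfl key, Finset.sum_add_distrib]
    congr 1
    rw [show (l+1)/2+2 = ((l+1)/2+1)+1 from rfl, Finset.sum_range_succ', Finset.mul_sum _ _ (q^(l+1)*s)]
    simp only [Nat.add_sub_cancel, if_neg (Nat.succ_ne_zero _), if_pos rfl, if_true, add_zero]
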